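/- Fix a nonzero element Λ of the orthogonal complement J^⊥ = {a ∈ A : t(a·j) = 0 for all j ∈ J}. Then for every nonzero f ∈ A there exists g ∈ A such that g·f = Λ. -/

import Mathlib

/-- The orthogonal complement `J^⊥ = {a ∈ A : t(a·j) = 0 for all j ∈ J}` of a
subspace `J` of an algebra `A` with respect to the bilinear form `(a,b) ↦ t(ab)`. -/
def orthComplement {k A : Type*} [Field k] [Ring A] [Algebra k A]
    (J : Submodule k A) (t : A →ₗ[k] k) : Submodule k A where
  carrier := {a | ∀ j ∈ J, t (a * j) = 0}
  add_mem' := by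
    intro a b ha hb j hj
    rw [add_mul, map_add, ha j hj, hb j hj, add_zero]
  zero_mem' := by
    intro j hj
    rw [zero_mul, map_zero]
  smul_mem' := by
    intro c a ha j hj
    rw [smul_mul_assoc, map_smul, ha j hj, smul_zero]

/-- **Existence of gluing morphisms (Lemma 2.8(6) of the paper, algebraic core).**
Let `A` be a finite-dimensional associative unital algebra over an algebraically closed
field `k`, which is local: its non-invertible elements form a two-sided ideal `J`.
Let `t : A → k` be a trace (`t(ab) = t(ba)`) such that the bilinear form
`(a,b) ↦ t(ab)` is nondegenerate.  Fix a nonzero `Λ ∈ J^⊥`.  Then for every nonzero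
`f ∈ A` there exists `g ∈ A` with `g·f = Λ`. -/
theorem exists_gluing
    {k A : Type*} [Field k] [IsAlgClosed k] [Ring A] [Algebra k A]
    [FiniteDimensional k A]
    (J : Submodule k A)
    (hJ : ∀ a : A, a ∈ J ↔ ¬ IsUnit a)
    (hJmul : ∀ a ∈ J, ∀ b : A, a * b ∈ J ∧ b * a ∈ J)
    (t : A →ₗ[k] k)
    (htr : ∀ a b : A, t (a * b) = t (b * a))
    (hnd : ∀ a : A, (∀ b : A, t (a * b) = 0) → a = 0)
    (Λ : A) (hΛmem : Λ ∈ orthComplement J t) (hΛ : Λ ≠ 0) :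
    ∀ f : A, f ≠ 0 → ∃ g : A, g * f = Λ := by
  intro f hf
  have hΛmem' : ∀ j ∈ J, t (Λ * j) = 0 := hΛmem
  set B : LinearMap.BilinForm k A := (LinearMap.mul k A).compr₂ t with hB
  have hBapp : ∀ a b : A, B a b = t (a * b) := fun a b => rfl
  have hsymm : B.IsRefl := fun a b h => by rw [hBapp, htr]; exact h
  have hBnd : B.Nondegenerate :=
    (LinearMap.IsRefl.nondegenerate_iff_separatingLeft hsymm).2 (fun a h => hnd a h)
  set W : Submodule k A := LinearMap.range (LinearMap.mulRight k f) with hW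
  have key : Λ ∈ B.orthogonal (B.orthogonal W) := by
    rw [LinearMap.BilinForm.mem_orthogonal_iff]
    intro u hu
    rw [LinearMap.BilinForm.mem_orthogonal_iff] at hu
    have hfu : f * u = 0 := by
      apply hnd
      intro x
      have := hu (x * f) ⟨x, rfl⟩
      rw [hBapp] at this
      rw [← this, htr, mul_assoc]
    have huJ : u ∈ J := by
      rw [hJ]
      intro hun
      exact hf (by
        have := congrArg (· * (hun.unit⁻¹ : Aˣ).1) hfu
        simpa [mul_assoc, IsUnit.mul_val_inv] using this)
    rw [hBapp, htr]
    exact hΛmem' u huJ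
  rw [LinearMap.BilinForm.orthogonal_orthogonal hBnd hsymm] at key
  obtain ⟨g, hg⟩ := key
  exact ⟨g, hg⟩
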